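/- Suppose A satisfies the upper RIP bound of order K: ‖Ax‖₂ ≤ √(1+δ)‖x‖₂ for all K-sparse x. Then for every vector x ∈ ℂⁿ (not necessarily sparse), ‖Ax‖₂ ≤ √(1+δ)·(‖x‖₂ + ‖x‖₁/√K). -/

import Mathlib

open scoped BigOperators

/-- The Euclidean (ℓ₂) norm of a finitely indexed complex vector. -/
noncomputable def l2 {ι : Type*} [Fintype ι] (v : ι → ℂ) : ℝ :=
  Real.sqrt (∑ i, ‖v i‖ ^ 2)

/-- The ℓ₁ norm of a finitely indexed complex vector. -/
noncomputable def l1 {ι : Type*} [Fintype ι] (v : ι → ℂ) : ℝ :=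
  ∑ i, ‖v i‖

/-- A vector is `K`-sparse if it has at most `K` nonzero entries. -/
def Sparse {n : ℕ} (K : ℕ) (x : Fin n → ℂ) : Prop :=
  ∃ s : Finset (Fin n), s.card ≤ K ∧ ∀ i ∉ s, x i = 0

/-- `xK` is a best `K`-term approximation of `x`: it is `K`-sparse, agrees with `x`
on its support, and keeps the largest-magnitude entries. -/
def IsBestKApprox {n : ℕ} (K : ℕ) (x xK : Fin n → ℂ) : Prop :=
  Sparse K xK ∧ (∀ i, xK i ≠ 0 → xK i = x i) ∧
    (∀ i j, xK i ≠ 0 → xK j = 0 → ‖x j‖ ≤ ‖x i‖)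

lemma l2_nonneg {ι : Type*} [Fintype ι] (v : ι → ℂ) : 0 ≤ l2 v := Real.sqrt_nonneg _
lemma l2_eq_norm {ι : Type*} [Fintype ι] (v : ι → ℂ) :
    l2 v = ‖(WithLp.toLp 2 v : EuclideanSpace ℂ ι)‖ := by
  rw [EuclideanSpace.norm_eq]; rfl
lemma l2_add_le {ι : Type*} [Fintype ι] (u v : ι → ℂ) : l2 (u + v) ≤ l2 u + l2 v := by
  rw [l2_eq_norm, l2_eq_norm, l2_eq_norm, WithLp.toLp_add]; exact norm_add_le _ _
lemma l2_sum_le {ι α : Type*} [Fintype ι] (s : Finset α) (f : α → ι → ℂ) :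
    l2 (∑ t ∈ s, f t) ≤ ∑ t ∈ s, l2 (f t) := by
  classical
  induction s using Finset.induction_on with
  | empty => simp [l2]
  | insert _ _ h ih =>
      rw [Finset.sum_insert h, Finset.sum_insert h]
      calc l2 _ ≤ l2 _ + l2 _ := l2_add_le _ _
        _ ≤ _ := by linarith
lemma l2_mono {ι : Type*} [Fintype ι] {u v : ι → ℂ} (h : ∀ i, ‖u i‖ ≤ ‖v i‖) :
    l2 u ≤ l2 v :=
  Real.sqrt_le_sqrt (Finset.sum_le_sum fun i _ =>
    pow_le_pow_left₀ (norm_nonneg _) (h i) 2)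

lemma key {m n K : ℕ} (hK : 0 < K)
    (A : Matrix (Fin m) (Fin n) ℂ) (δ : ℝ) (hδ : 0 ≤ δ)
    (hRIP : ∀ x : Fin n → ℂ, Sparse K x →
      l2 (A.mulVec x) ≤ Real.sqrt (1 + δ) * l2 x)
    (x : Fin n → ℂ)
    (hmono : ∀ k l : Fin n, k ≤ l → ‖x l‖ ≤ ‖x k‖) :
    l2 (A.mulVec x) ≤ Real.sqrt (1 + δ) * (l2 x + l1 x / Real.sqrt K) := by
  classical
  set y : ℕ → Fin n → ℂ := fun t k => if (k : ℕ) / K = t then x k else 0 with hy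
  set s : ℕ → Finset (Fin n) := fun t => Finset.univ.filter (fun k => (k : ℕ) / K = t) with hs
  set S : ℕ → ℝ := fun t => ∑ k ∈ s t, ‖x k‖ with hS
  have hSnn : ∀ t, 0 ≤ S t := fun t => Finset.sum_nonneg fun _ _ => norm_nonneg _
  -- x is the sum of the blocks
  have hx_sum : ∑ t ∈ Finset.range n, y t = x := by
    funext k
    have hk : (k : ℕ) / K < n := lt_of_le_of_lt (Nat.div_le_self _ _) k.2
    rw [Finset.sum_apply]
    rw [Finset.sum_eq_single ((k : ℕ) / K)]
    · simp [hy]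
    · intro t _ hne
      simp only [hy]
      exact if_neg (fun h => hne h.symm)
    · intro h; exact absurd (Finset.mem_range.mpr hk) h
  -- each block is K-sparse
  have hcard : ∀ t, (s t).card ≤ K := by
    intro t
    have hmaps : ∀ k ∈ s t, (k : ℕ) % K ∈ Finset.range K :=
      fun k _ => Finset.mem_range.mpr (Nat.mod_lt _ hK)
    refine le_trans (Finset.card_le_card_of_injOn (fun k => (k : ℕ) % K) hmaps ?_) (by simp)
    intro a ha b hb hab
    simp only [hs, Finset.mem_coe, Finset.mem_filter, Finset.mem_univ, true_and] at ha hb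
    have hab' : (a : ℕ) % K = (b : ℕ) % K := hab
    refine Fin.ext ?_
    conv_lhs => rw [← Nat.div_add_mod (a : ℕ) K]
    conv_rhs => rw [← Nat.div_add_mod (b : ℕ) K]
    rw [ha, hb, hab']
  have hsparse : ∀ t, Sparse K (y t) := by
    intro t
    refine ⟨s t, hcard t, fun k hk => ?_⟩
    have h : ¬ ((k : ℕ) / K = t) := by
      intro h; exact hk (by simp [hs, h])
    simp only [hy]; exact if_neg h
  -- l2 of each block
  have hyl2 : ∀ t, (∑ k, ‖y t k‖ ^ 2) = ∑ k ∈ s t, ‖x k‖ ^ 2 := by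
    intro t
    rw [← Finset.sum_subset (Finset.subset_univ (s t))]
    · exact Finset.sum_congr rfl fun k hk => by
        simp [hy, (Finset.mem_filter.mp hk).2]
    · intro k _ hk
      have h : ¬ ((k : ℕ) / K = t) := by
        intro h; exact hk (by simp [hs, h])
      simp [hy, h]
  -- l1 of x decomposes
  have hl1 : ∑ t ∈ Finset.range n, S t = l1 x := by
    rw [hS, l1]
    exact Finset.sum_fiberwise_of_maps_to (fun k _ =>
      Finset.mem_range.mpr (lt_of_le_of_lt (Nat.div_le_self _ _) k.2)) _
  -- first block bounded by l2 x
  have h0 : l2 (y 0) ≤ l2 x := by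
    apply l2_mono
    intro k
    by_cases h : (k : ℕ) / K = 0 <;> simp [hy, h]
  -- key estimate for later blocks
  have hstep : ∀ t, ∀ k ∈ s (t + 1), (K : ℝ) * ‖x k‖ ≤ S t := by
    intro t k hk
    have hkd : (k : ℕ) / K = t + 1 := (Finset.mem_filter.mp hk).2
    have hklb : (t + 1) * K ≤ (k : ℕ) := by
      calc (t + 1) * K = ((k : ℕ) / K) * K := by rw [hkd]
        _ ≤ (k : ℕ) := Nat.div_mul_le_self _ _
    have hin : ∀ i ∈ s t, ‖x k‖ ≤ ‖x i‖ := by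
      intro i hi
      apply hmono i k
      have hid : (i : ℕ) / K = t := (Finset.mem_filter.mp hi).2
      have : (i : ℕ) < (t + 1) * K := (Nat.div_lt_iff_lt_mul hK).mp (by omega)
      exact Fin.le_def.mpr (by omega)
    have h1 : (s t).card • ‖x k‖ ≤ S t := Finset.card_nsmul_le_sum (s t) _ _ hin
    have hcardeq : (s t).card = K := by
      refine le_antisymm (hcard t) ?_
      have hrange : ∀ j ∈ Finset.range K, t * K + j < n := by
        intro j hj
        have hj' : j < K := Finset.mem_range.mp hj
        have h2 : t * K + j < (t + 1) * K := by
          rw [Nat.succ_mul]; omega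
        have := k.2
        omega
      have hmaps : ∀ j ∈ Finset.range K,
          (⟨(t * K + j) % n, Nat.mod_lt _ (by omega)⟩ : Fin n) ∈ s t := by
        intro j hj
        have hj' : j < K := Finset.mem_range.mp hj
        have hlt := hrange j hj
        simp only [hs, Finset.mem_filter, Finset.mem_univ, true_and]
        rw [Nat.mod_eq_of_lt hlt]
        rw [mul_comm, Nat.mul_add_div hK, Nat.div_eq_of_lt hj', Nat.add_zero]
      have hinj : Set.InjOn (fun j => (⟨(t * K + j) % n, Nat.mod_lt _ (by omega)⟩ : Fin n))
          (Finset.range K) := by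
        intro a ha b hb hab
        have ha' : a < K := Finset.mem_range.mp ha
        have hb' : b < K := Finset.mem_range.mp hb
        have h1 := hrange a ha
        have h2 := hrange b hb
        have : (t * K + a) % n = (t * K + b) % n := congrArg Fin.val hab
        rw [Nat.mod_eq_of_lt h1, Nat.mod_eq_of_lt h2] at this
        omega
      have := Finset.card_le_card_of_injOn _ hmaps hinj
      simpa using this
    rw [hcardeq] at h1
    simpa [nsmul_eq_mul] using h1
  -- l2 bound for later blocks
  have hl2y : ∀ t, l2 (y (t + 1)) ≤ S t / Real.sqrt K := by
    intro t
    have hdivnn : (0:ℝ) ≤ S t / Real.sqrt K :=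
      div_nonneg (hSnn t) (Real.sqrt_nonneg _)
    have hbound : ∀ k ∈ s (t + 1), ‖x k‖ ≤ S t / K := by
      intro k hk
      have := hstep t k hk
      rw [le_div_iff₀ (by exact_mod_cast hK)]
      linarith
    have hS1 : S (t + 1) ≤ S t := by
      have h2 : S (t + 1) ≤ (s (t + 1)).card • (S t / K) :=
        Finset.sum_le_card_nsmul _ _ _ hbound
      have h3 : ((s (t + 1)).card : ℝ) * (S t / K) ≤ K * (S t / K) := by
        apply mul_le_mul_of_nonneg_right _ (div_nonneg (hSnn t) (by positivity))
        exact_mod_cast hcard (t + 1)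
      have h4 : (K : ℝ) * (S t / K) = S t := by
        field_simp
      rw [nsmul_eq_mul] at h2
      linarith
    have hsq : ∑ k ∈ s (t + 1), ‖x k‖ ^ 2 ≤ (S t) ^ 2 / K := by
      have h5 : ∑ k ∈ s (t + 1), ‖x k‖ ^ 2 ≤ ∑ k ∈ s (t + 1), ‖x k‖ * (S t / K) := by
        refine Finset.sum_le_sum fun k hk => ?_
        have h6 := hbound k hk
        have h7 := norm_nonneg (x k)
        nlinarith
      rw [← Finset.sum_mul] at h5
      have h8 : S (t + 1) * (S t / K) ≤ S t * (S t / K) :=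
        mul_le_mul_of_nonneg_right hS1 (div_nonneg (hSnn t) (by positivity))
      have h9 : S t * (S t / K) = (S t) ^ 2 / K := by ring
      calc ∑ k ∈ s (t + 1), ‖x k‖ ^ 2 ≤ S (t + 1) * (S t / K) := h5
        _ ≤ (S t) ^ 2 / K := by linarith
    calc l2 (y (t + 1)) = Real.sqrt (∑ k ∈ s (t + 1), ‖x k‖ ^ 2) := by rw [l2, hyl2]
      _ ≤ Real.sqrt ((S t) ^ 2 / K) := Real.sqrt_le_sqrt hsq
      _ = S t / Real.sqrt K := by
          rw [Real.sqrt_div (sq_nonneg (S t)) (K : ℝ), Real.sqrt_sq (hSnn t)]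
  -- assemble
  have main : l2 (A.mulVec x) ≤ Real.sqrt (1 + δ) * ∑ t ∈ Finset.range n, l2 (y t) := by
    conv_lhs => rw [← hx_sum]
    have hmv : A.mulVec (∑ t ∈ Finset.range n, y t)
        = ∑ t ∈ Finset.range n, A.mulVec (y t) := by
      have h := map_sum A.mulVecLin y (Finset.range n)
      simp only [Matrix.mulVecLin_apply] at h
      exact h
    rw [hmv]
    calc l2 (∑ t ∈ Finset.range n, A.mulVec (y t))
        ≤ ∑ t ∈ Finset.range n, l2 (A.mulVec (y t)) := l2_sum_le _ _
      _ ≤ ∑ t ∈ Finset.range n, Real.sqrt (1 + δ) * l2 (y t) :=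
          Finset.sum_le_sum fun t _ => hRIP _ (hsparse t)
      _ = Real.sqrt (1 + δ) * ∑ t ∈ Finset.range n, l2 (y t) := by
          rw [Finset.mul_sum]
  have hsum : ∑ t ∈ Finset.range n, l2 (y t) ≤ l2 x + l1 x / Real.sqrt K := by
    rcases Nat.eq_zero_or_pos n with hn | hn
    · subst hn
      have hx0 : l1 x = 0 := by simp [l1]
      have hl2x : (0:ℝ) ≤ l2 x := l2_nonneg x
      simp [hx0]
      positivity
    obtain ⟨N, rfl⟩ : ∃ N, n = N + 1 := ⟨n - 1, by omega⟩
    rw [Finset.sum_range_succ']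
    have h1 : ∑ t ∈ Finset.range N, l2 (y (t + 1))
        ≤ ∑ t ∈ Finset.range N, S t / Real.sqrt K :=
      Finset.sum_le_sum fun t _ => hl2y t
    have h2 : ∑ t ∈ Finset.range N, S t / Real.sqrt K
        ≤ ∑ t ∈ Finset.range (N + 1), S t / Real.sqrt K := by
      apply Finset.sum_le_sum_of_subset_of_nonneg
        (Finset.range_subset_range.mpr (by omega))
      intro t _ _
      exact div_nonneg (hSnn t) (Real.sqrt_nonneg _)
    have h3 : ∑ t ∈ Finset.range (N + 1), S t / Real.sqrt K = l1 x / Real.sqrt K := by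
      rw [← Finset.sum_div, hl1]
    linarith
  calc l2 (A.mulVec x) ≤ Real.sqrt (1 + δ) * ∑ t ∈ Finset.range n, l2 (y t) := main
    _ ≤ Real.sqrt (1 + δ) * (l2 x + l1 x / Real.sqrt K) :=
        mul_le_mul_of_nonneg_left hsum (Real.sqrt_nonneg _)

lemma l2_comp_equiv {ι : Type*} [Fintype ι] (σ : Equiv.Perm ι) (v : ι → ℂ) :
    l2 (v ∘ σ) = l2 v := by
  unfold l2
  rw [← Equiv.sum_comp σ (fun i => ‖v i‖ ^ 2)]
  rfl

lemma l1_comp_equiv {ι : Type*} [Fintype ι] (σ : Equiv.Perm ι) (v : ι → ℂ) :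
    l1 (v ∘ σ) = l1 v := by
  unfold l1
  rw [← Equiv.sum_comp σ (fun i => ‖v i‖)]
  rfl

/-- image of an arbitrary (not necessarily sparse) signal under a matrix
satisfying the upper RIP bound of order K. -/
theorem image_of_arbitrary_signal {m n K : ℕ} (hK : 0 < K)
    (A : Matrix (Fin m) (Fin n) ℂ) (δ : ℝ) (hδ : 0 ≤ δ)
    (hRIP : ∀ x : Fin n → ℂ, Sparse K x →
      l2 (A.mulVec x) ≤ Real.sqrt (1 + δ) * l2 x) :
    ∀ x : Fin n → ℂ,
      l2 (A.mulVec x) ≤ Real.sqrt (1 + δ) * (l2 x + l1 x / Real.sqrt K) := by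
  intro x
  classical
  set σ : Equiv.Perm (Fin n) := Tuple.sort (fun k => -‖x k‖) with hσ
  have hmono : ∀ k l : Fin n, k ≤ l → ‖x (σ l)‖ ≤ ‖x (σ k)‖ := by
    intro k l hkl
    have h := Tuple.monotone_sort (fun k => -‖x k‖) hkl
    simp only [Function.comp_apply] at h
    rw [← hσ] at h
    linarith
  set B : Matrix (Fin m) (Fin n) ℂ := A.submatrix id (⇑σ) with hB
  have hBmul : ∀ z : Fin n → ℂ, B.mulVec z = A.mulVec (z ∘ ⇑σ.symm) := by
    intro z
    funext j
    simp only [Matrix.mulVec, dotProduct, hB, Matrix.submatrix_apply, id_eq,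
      Function.comp_apply]
    rw [← Equiv.sum_comp σ (fun i => A j i * z (σ.symm i))]
    simp
  have hRIP' : ∀ z : Fin n → ℂ, Sparse K z →
      l2 (B.mulVec z) ≤ Real.sqrt (1 + δ) * l2 z := by
    rintro z ⟨t, htc, hz⟩
    have hsp : Sparse K (z ∘ ⇑σ.symm) := by
      refine ⟨t.map σ.toEmbedding, by simpa using htc, fun i hi => ?_⟩
      have : σ.symm i ∉ t := by
        intro hmem
        exact hi (Finset.mem_map.mpr ⟨σ.symm i, hmem, by simp⟩)
      exact hz _ this
    have h2 : l2 (z ∘ ⇑σ.symm) = l2 z := l2_comp_equiv σ.symm z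
    rw [hBmul, ← h2]
    exact hRIP _ hsp
  have hkey := key hK B δ hδ hRIP' (x ∘ ⇑σ) hmono
  have hx : B.mulVec (x ∘ ⇑σ) = A.mulVec x := by
    rw [hBmul]
    have hc : (x ∘ ⇑σ) ∘ ⇑σ.symm = x :=
      funext fun i => congrArg x (Equiv.apply_symm_apply σ i)
    rw [hc]
  rw [hx, l2_comp_equiv σ x, l1_comp_equiv σ x] at hkey
  exact hkey
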